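/- For every x ∈ [4/9, 1/2), one has σ²(x) < σ²(c). -/

import Mathlib

open scoped BigOperators

/-- `V x ξ = min x ξ - x * ξ`. -/
noncomputable def V (x ξ : ℝ) : ℝ := min x ξ - x * ξ

/-- `σ²(x) = V(⟨x⟩, ⟨x⟩) + 2 ∑_{k=1}^∞ 6^{-k} V(⟨2^k x⟩, ⟨3^k x⟩)`. -/
noncomputable def sigmaSq (x : ℝ) : ℝ :=
  V (Int.fract x) (Int.fract x) +
    2 * ∑' k : ℕ, (1 / 6 ^ (k + 1) : ℝ) *
      V (Int.fract ((2 : ℝ) ^ (k + 1) * x)) (Int.fract ((3 : ℝ) ^ (k + 1) * x))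

/-- `c = 277/665 = 277/(3^6 - 2^6)`. -/
noncomputable def c : ℝ := 277 / 665

/-- The `k`-th term of the series defining `sigmaSq`. -/
noncomputable def sTerm (y : ℝ) (k : ℕ) : ℝ :=
  (1 / 6 ^ (k + 1) : ℝ) *
    V (Int.fract ((2 : ℝ) ^ (k + 1) * y)) (Int.fract ((3 : ℝ) ^ (k + 1) * y))

lemma sigmaSq_eq (y : ℝ) :
    sigmaSq y = V (Int.fract y) (Int.fract y) + 2 * ∑' k : ℕ, sTerm y k := rfl

lemma V_fract_nonneg (a b : ℝ) : 0 ≤ V (Int.fract a) (Int.fract b) := by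
  have h1 := Int.fract_nonneg a
  have h2 := Int.fract_nonneg b
  have h3 := Int.fract_lt_one a
  have h4 := Int.fract_lt_one b
  unfold V
  rcases le_total (Int.fract a) (Int.fract b) with h | h
  · rw [min_eq_left h]; nlinarith
  · rw [min_eq_right h]; nlinarith

lemma V_fract_le_quarter (a b : ℝ) : V (Int.fract a) (Int.fract b) ≤ 1 / 4 := by
  have h1 := Int.fract_nonneg a
  have h2 := Int.fract_nonneg b
  have h3 := Int.fract_lt_one a
  have h4 := Int.fract_lt_one b
  unfold V
  rcases le_total (Int.fract a) (Int.fract b) with h | h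
  · rw [min_eq_left h]
    nlinarith [sq_nonneg (Int.fract a - 1/2), mul_le_mul_of_nonneg_left h h1]
  · rw [min_eq_right h]
    nlinarith [sq_nonneg (Int.fract b - 1/2), mul_le_mul_of_nonneg_right h h2]

lemma sTerm_nonneg (y : ℝ) (k : ℕ) : 0 ≤ sTerm y k := by
  apply mul_nonneg
  · positivity
  · exact V_fract_nonneg _ _

lemma sTerm_le (y : ℝ) (k : ℕ) : sTerm y k ≤ (1 / 24 : ℝ) * (1 / 6) ^ k := by
  have h : sTerm y k ≤ (1 / 6 ^ (k + 1) : ℝ) * (1 / 4) := by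
    apply mul_le_mul_of_nonneg_left (V_fract_le_quarter _ _)
    positivity
  refine h.trans (le_of_eq ?_)
  rw [pow_succ]
  field_simp
  rw [show (6:ℝ) ^ k * 6 * 4 * (1 / 6) ^ k = ((6:ℝ) * (1 / 6)) ^ k * 24 by rw [mul_pow]; ring]; norm_num

lemma summable_sTerm (y : ℝ) : Summable (sTerm y) := by
  apply Summable.of_nonneg_of_le (sTerm_nonneg y) (sTerm_le y)
  exact (summable_geometric_of_lt_one (by norm_num) (by norm_num)).mul_left _

lemma tsum_sTerm_split (y : ℝ) :
    ∑' k : ℕ, sTerm y k = sTerm y 0 + sTerm y 1 + ∑' k : ℕ, sTerm y (k + 2) := by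
  have hs := summable_sTerm y
  have hs1 : Summable (fun k => sTerm y (k + 1)) := (summable_nat_add_iff 1).2 hs
  rw [Summable.tsum_eq_zero_add hs, Summable.tsum_eq_zero_add hs1]
  have : (fun n : ℕ => sTerm y (n + 1 + 1)) = fun n : ℕ => sTerm y (n + 2) := by
    funext n; norm_num
  rw [this]
  ring

lemma tail_nonneg (y : ℝ) : 0 ≤ ∑' k : ℕ, sTerm y (k + 2) :=
  tsum_nonneg fun k => sTerm_nonneg y _

lemma tail_le (y : ℝ) : ∑' k : ℕ, sTerm y (k + 2) ≤ 1 / 720 := by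
  have hle : ∀ k : ℕ, sTerm y (k + 2) ≤ (1 / 864 : ℝ) * (1 / 6) ^ k := by
    intro k
    refine (sTerm_le y (k + 2)).trans (le_of_eq ?_)
    rw [pow_add]
    ring
  have hsum2 : Summable (fun k => sTerm y (k + 2)) := (summable_nat_add_iff 2).2 (summable_sTerm y)
  have hgeom : Summable (fun k : ℕ => (1 / 864 : ℝ) * (1 / 6) ^ k) :=
    (summable_geometric_of_lt_one (by norm_num) (by norm_num)).mul_left _
  calc ∑' k : ℕ, sTerm y (k + 2) ≤ ∑' k : ℕ, (1 / 864 : ℝ) * (1 / 6) ^ k :=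
        Summable.tsum_le_tsum hle hsum2 hgeom
    _ = (1 / 864 : ℝ) * ∑' k : ℕ, ((1 / 6 : ℝ)) ^ k := tsum_mul_left
    _ = 1 / 720 := by
        rw [tsum_geometric_of_lt_one (by norm_num) (by norm_num)]
        norm_num

theorem sigmaSq_lt_on_interval_9 (x : ℝ) (hx : x ∈ Set.Ico (4/9 : ℝ) (1/2)) :
    sigmaSq x < sigmaSq c := by
  obtain ⟨hx1, hx2⟩ := hx
  -- fractional parts for x
  have hfx : Int.fract x = x := Int.fract_eq_self.2 ⟨by linarith, by linarith⟩
  have hf2 : Int.fract ((2 : ℝ) * x) = 2 * x := Int.fract_eq_self.2 ⟨by linarith, by linarith⟩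
  have hf3 : Int.fract ((3 : ℝ) * x) = 3 * x - 1 := by
    have h : Int.fract ((3 : ℝ) * x) = Int.fract (3 * x - 1) := by
      rw [show (3 * x - 1 : ℝ) = 3 * x - (1 : ℤ) by push_cast; ring, Int.fract_sub_intCast]
    rw [h, Int.fract_eq_self.2 ⟨by linarith, by linarith⟩]
  have hf4 : Int.fract ((4 : ℝ) * x) = 4 * x - 1 := by
    have h : Int.fract ((4 : ℝ) * x) = Int.fract (4 * x - 1) := by
      rw [show (4 * x - 1 : ℝ) = 4 * x - (1 : ℤ) by push_cast; ring, Int.fract_sub_intCast]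
    rw [h, Int.fract_eq_self.2 ⟨by linarith, by linarith⟩]
  have hf9 : Int.fract ((9 : ℝ) * x) = 9 * x - 4 := by
    have h : Int.fract ((9 : ℝ) * x) = Int.fract (9 * x - 4) := by
      rw [show (9 * x - 4 : ℝ) = 9 * x - (4 : ℤ) by push_cast; ring, Int.fract_sub_intCast]
    rw [h, Int.fract_eq_self.2 ⟨by linarith, by linarith⟩]
  have ht0 : sTerm x 0 = (1 / 6 : ℝ) * ((3 * x - 1) - 2 * x * (3 * x - 1)) := by
    unfold sTerm V
    rw [show ((2 : ℝ)) ^ (0 + 1) * x = 2 * x by ring, show ((3 : ℝ)) ^ (0 + 1) * x = 3 * x by ring,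
      hf2, hf3, min_eq_right (by linarith)]
    ring
  have ht1 : sTerm x 1 = (1 / 36 : ℝ) * ((9 * x - 4) - (4 * x - 1) * (9 * x - 4)) := by
    unfold sTerm V
    have h2 : ((2 : ℝ)) ^ (1 + 1) * x = 4 * x := by ring
    have h3 : ((3 : ℝ)) ^ (1 + 1) * x = 9 * x := by ring
    rw [h2, h3, hf4, hf9, min_eq_right (by linarith)]
    ring
  -- fractional parts for c
  have hc : c = 277 / 665 := rfl
  have hfc : Int.fract c = 277 / 665 := by
    rw [hc]; exact Int.fract_eq_self.2 ⟨by norm_num, by norm_num⟩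
  have hfc2 : Int.fract ((2 : ℝ) * c) = 554 / 665 := by
    rw [hc, show (2 : ℝ) * (277 / 665) = 554 / 665 by norm_num]
    exact Int.fract_eq_self.2 ⟨by norm_num, by norm_num⟩
  have hfc3 : Int.fract ((3 : ℝ) * c) = 166 / 665 := by
    have h : Int.fract ((3 : ℝ) * c) = Int.fract (166 / 665 : ℝ) := by
      rw [show (166 / 665 : ℝ) = 3 * c - (1 : ℤ) by rw [hc]; push_cast; norm_num,
        Int.fract_sub_intCast]
    rw [h, Int.fract_eq_self.2 ⟨by norm_num, by norm_num⟩]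
  have hfc4 : Int.fract ((4 : ℝ) * c) = 443 / 665 := by
    have h : Int.fract ((4 : ℝ) * c) = Int.fract (443 / 665 : ℝ) := by
      rw [show (443 / 665 : ℝ) = 4 * c - (1 : ℤ) by rw [hc]; push_cast; norm_num,
        Int.fract_sub_intCast]
    rw [h, Int.fract_eq_self.2 ⟨by norm_num, by norm_num⟩]
  have hfc9 : Int.fract ((9 : ℝ) * c) = 498 / 665 := by
    have h : Int.fract ((9 : ℝ) * c) = Int.fract (498 / 665 : ℝ) := by
      rw [show (498 / 665 : ℝ) = 9 * c - (3 : ℤ) by rw [hc]; push_cast; norm_num,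
        Int.fract_sub_intCast]
    rw [h, Int.fract_eq_self.2 ⟨by norm_num, by norm_num⟩]
  have htc0 : sTerm c 0 = (1 / 6 : ℝ) * (166 / 665 - 554 / 665 * (166 / 665)) := by
    unfold sTerm V
    rw [show ((2 : ℝ)) ^ (0 + 1) * c = 2 * c by ring, show ((3 : ℝ)) ^ (0 + 1) * c = 3 * c by ring,
      hfc2, hfc3, min_eq_right (by norm_num)]
    ring
  have htc1 : sTerm c 1 = (1 / 36 : ℝ) * (443 / 665 - 443 / 665 * (498 / 665)) := by
    unfold sTerm V
    have h2 : ((2 : ℝ)) ^ (1 + 1) * c = 4 * c := by ring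
    have h3 : ((3 : ℝ)) ^ (1 + 1) * c = 9 * c := by ring
    rw [h2, h3, hfc4, hfc9, min_eq_left (by norm_num)]
    ring
  -- upper bound for sigmaSq x
  have hub : sigmaSq x ≤ x - x ^ 2 +
      2 * ((1 / 6 : ℝ) * ((3 * x - 1) - 2 * x * (3 * x - 1)) +
        (1 / 36 : ℝ) * ((9 * x - 4) - (4 * x - 1) * (9 * x - 4)) + 1 / 720) := by
    rw [sigmaSq_eq, tsum_sTerm_split, hfx, ht0, ht1]
    unfold V
    rw [min_self]
    nlinarith [tail_le x]
  -- lower bound for sigmaSq c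
  have hlb : sigmaSq c ≥ 107476 / 442225 +
      2 * ((1 / 6 : ℝ) * (166 / 665 - 554 / 665 * (166 / 665)) +
        (1 / 36 : ℝ) * (443 / 665 - 443 / 665 * (498 / 665))) := by
    rw [sigmaSq_eq, tsum_sTerm_split, hfc, htc0, htc1]
    unfold V
    rw [min_self]
    nlinarith [tail_nonneg c]
  -- conclude
  refine lt_of_le_of_lt hub (lt_of_lt_of_le ?_ hlb)
  nlinarith [sq_nonneg (x - 41 / 90)]
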